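/- arXiv:2212.09364 — 2 statements merged into one kernel-verified Lean document; each statement's English description precedes it below -/
import Mathlib

section
/- Let W be a (k+1)-dimensional space of degree-d forms with k > 1, defined over a field, and suppose stability is given by the Hilbert–Mumford numerical criterion via Plücker weights. If W contains a nonzero element f₀ that is GIT semistable as a hypersurface, and W is non-stable (resp. unstable), then there exists a k-dimensional subspace W' ⊂ W that is non-stable (resp. unstable). -/
set_option maxHeartbeats 1000000
set_option synthInstance.maxHeartbeats 400000


open MvPolynomial

/-- The linear weight of an exponent vector: w(I) = Σ_l c_l · i_l. -/
def wt {n : ℕ} (c : Fin n → ℤ) (I : Fin n →₀ ℕ) : ℤ := ∑ l, c l * (I l : ℤ)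

/-- ω(f) = min of w over exponent vectors of monomials with nonzero coefficient
(junk value 0 for f = 0). -/
noncomputable def omega {K : Type*} [CommSemiring K] {n : ℕ} (c : Fin n → ℤ)
    (f : MvPolynomial (Fin n) K) : ℤ :=
  WithTop.untopD 0 ((f.support.image (wt c)).min)

/-- ω of a linear system given by generators f: the minimum of Σ_j w(I_j) over tuples of
exponent vectors whose Plücker coordinate (coefficient determinant) is nonzero. -/
noncomputable def omegaW {K : Type*} [CommRing K] {n : ℕ} {ι : Type*} [Fintype ι]
    [DecidableEq ι] (c : Fin n → ℤ) (f : ι → MvPolynomial (Fin n) K) : ℤ :=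
  sInf { s : ℤ | ∃ I : ι → (Fin n →₀ ℕ),
    (Matrix.of fun j i => MvPolynomial.coeff (I i) (f j)).det ≠ 0 ∧ s = ∑ j, wt c (I j) }


/-- A normalized one-parameter subgroup of SL(n+1): integer weights
a₀ ≥ a₁ ≥ ... ≥ aₙ with Σ aₗ = 0 and a₀ > 0. -/
def Normalized {n : ℕ} (a : Fin (n+1) → ℤ) : Prop :=
  Antitone a ∧ (∑ l, a l) = 0 ∧ 0 < a 0

/-- The normalization factor A_λ = Σ_{l=0}^{n-1} (a_l - a_n). -/
def Aof {n : ℕ} (a : Fin (n+1) → ℤ) : ℤ :=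
  ∑ l : Fin n, (a l.castSucc - a (Fin.last n))

/-- The shifted weights a_l - a_n used in the tilde weights. -/
def cOf {n : ℕ} (a : Fin (n+1) → ℤ) : Fin (n+1) → ℤ :=
  fun l => a l - a (Fin.last n)

/-- A degree-e form g in n+1 variables is GIT stable iff ω(g,λ)/A_λ < e/(n+1) for every
normalized one-parameter subgroup λ. -/
def FormStable {K : Type*} [CommSemiring K] (n : ℕ) (e : ℚ)
    (g : MvPolynomial (Fin (n+1)) K) : Prop :=
  ∀ a : Fin (n+1) → ℤ, Normalized a →
    (omega (cOf a) g : ℚ) / (Aof a : ℚ) < e / (n + 1)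

/-- A degree-e form g in n+1 variables is GIT semistable iff ω(g,λ)/A_λ ≤ e/(n+1) for every
normalized one-parameter subgroup λ. -/
def FormSemistable {K : Type*} [CommSemiring K] (n : ℕ) (e : ℚ)
    (g : MvPolynomial (Fin (n+1)) K) : Prop :=
  ∀ a : Fin (n+1) → ℤ, Normalized a →
    (omega (cOf a) g : ℚ) / (Aof a : ℚ) ≤ e / (n + 1)

section Aux

variable {K : Type*} [Field K] {N : ℕ}

lemma omega_le_wt (c : Fin N → ℤ) {f : MvPolynomial (Fin N) K} {I : Fin N →₀ ℕ}
    (h : MvPolynomial.coeff I f ≠ 0) : omega c f ≤ wt c I := by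
  have hI : I ∈ f.support := MvPolynomial.mem_support_iff.mpr h
  have hmem : wt c I ∈ f.support.image (wt c) := Finset.mem_image_of_mem _ hI
  obtain ⟨b, hb⟩ := Finset.min_of_mem hmem
  have hle : (f.support.image (wt c)).min ≤ (wt c I : WithTop ℤ) := Finset.min_le hmem
  rw [hb] at hle
  rw [omega, hb, WithTop.untopD_coe]
  exact_mod_cast hle

lemma exists_coeff_wt_eq (c : Fin N → ℤ) {f : MvPolynomial (Fin N) K} (hf : f ≠ 0) :
    ∃ J, MvPolynomial.coeff J f ≠ 0 ∧ wt c J = omega c f := by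
  have hne : (f.support.image (wt c)).Nonempty :=
    (MvPolynomial.support_nonempty.mpr hf).image _
  obtain ⟨b, hb⟩ := Finset.min_of_nonempty hne
  obtain ⟨J, hJ, hwt⟩ := Finset.mem_image.mp (Finset.mem_of_min hb)
  exact ⟨J, MvPolynomial.mem_support_iff.mp hJ, by rw [hwt, omega, hb, WithTop.untopD_coe]⟩

lemma sum_omega_le_sum_wt {ι : Type*} [Fintype ι] [DecidableEq ι] (c : Fin N → ℤ)
    (g : ι → MvPolynomial (Fin N) K) (I : ι → (Fin N →₀ ℕ))
    (hdet : (Matrix.of fun j i => MvPolynomial.coeff (I i) (g j)).det ≠ 0) :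
    ∑ j, omega c (g j) ≤ ∑ j, wt c (I j) := by
  obtain ⟨σ, hσ⟩ : ∃ σ : Equiv.Perm ι, ∏ i, MvPolynomial.coeff (I i) (g (σ i)) ≠ 0 := by
    by_contra hc
    push_neg at hc
    apply hdet
    rw [Matrix.det_apply]
    refine Finset.sum_eq_zero fun σ _ => ?_
    have := hc σ
    simp only [Matrix.of_apply]
    rw [this, smul_zero]
  have h1 : ∀ i, omega c (g (σ i)) ≤ wt c (I i) := fun i =>
    omega_le_wt c (Finset.prod_ne_zero_iff.mp hσ i (Finset.mem_univ i))
  calc ∑ j, omega c (g j) = ∑ i, omega c (g (σ i)) := (Equiv.sum_comp σ _).symm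
    _ ≤ ∑ i, wt c (I i) := Finset.sum_le_sum fun i _ => h1 i

lemma det_base_ne_zero {ι : Type*} [Fintype ι] [DecidableEq ι]
    (f G : ι → MvPolynomial (Fin N) K)
    (hmem : ∀ j, G j ∈ Submodule.span K (Set.range f)) (I : ι → (Fin N →₀ ℕ))
    (hdet : (Matrix.of fun j i => MvPolynomial.coeff (I i) (G j)).det ≠ 0) :
    (Matrix.of fun j i => MvPolynomial.coeff (I i) (f j)).det ≠ 0 := by
  choose P hP using fun j => (Submodule.mem_span_range_iff_exists_fun K).mp (hmem j)
  have hmul : (Matrix.of fun j i => MvPolynomial.coeff (I i) (G j)) =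
      (Matrix.of P) * (Matrix.of fun j i => MvPolynomial.coeff (I i) (f j)) := by
    ext j i
    simp only [Matrix.mul_apply, Matrix.of_apply]
    rw [← hP j, MvPolynomial.coeff_sum]
    exact Finset.sum_congr rfl fun m _ => by rw [MvPolynomial.coeff_smul, smul_eq_mul]
  intro h0
  apply hdet
  rw [hmul, Matrix.det_mul, h0, mul_zero]

lemma det_cons_ne_zero {m : ℕ} (g₀ : MvPolynomial (Fin N) K) (J : Fin N →₀ ℕ)
    (hc : MvPolynomial.coeff J g₀ ≠ 0) (h : Fin m → MvPolynomial (Fin N) K)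
    (hzero : ∀ j, MvPolynomial.coeff J (h j) = 0) (I' : Fin m → (Fin N →₀ ℕ))
    (hdet : (Matrix.of fun j i => MvPolynomial.coeff (I' i) (h j)).det ≠ 0) :
    (Matrix.of fun j i => MvPolynomial.coeff ((Fin.cons J I' : Fin (m+1) → _) i)
      ((Fin.cons g₀ h : Fin (m+1) → _) j)).det ≠ 0 := by
  set M : Matrix (Fin (m+1)) (Fin (m+1)) K :=
    Matrix.of fun j i => MvPolynomial.coeff ((Fin.cons J I' : Fin (m+1) → _) i)
      ((Fin.cons g₀ h : Fin (m+1) → _) j) with hM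
  have hsub : M.submatrix (Fin.succAbove 0) Fin.succ =
      Matrix.of fun j i => MvPolynomial.coeff (I' i) (h j) := by
    ext j i
    simp [hM, Fin.succAbove_zero]
  have hdet2 : M.det = MvPolynomial.coeff J g₀ *
      (Matrix.of fun j i => MvPolynomial.coeff (I' i) (h j)).det := by
    rw [Matrix.det_succ_column_zero, Finset.sum_eq_single (0 : Fin (m+1))]
    · rw [hsub]
      simp [hM]
    · intro b _ hb
      have hb0 : M b 0 = 0 := by
        induction b using Fin.cases with
        | zero => exact absurd rfl hb
        | succ b' => simp [hM, hzero]
      rw [hb0, mul_zero, zero_mul]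
    · intro habs
      exact absurd (Finset.mem_univ _) habs
  rw [hdet2]
  exact mul_ne_zero hc hdet

lemma exists_tuple_det_ne_zero : ∀ (m : ℕ) (g : Fin m → MvPolynomial (Fin N) K),
    LinearIndependent K g → ∃ I : Fin m → (Fin N →₀ ℕ),
      (Matrix.of fun j i => MvPolynomial.coeff (I i) (g j)).det ≠ 0 := by
  intro m
  induction m with
  | zero =>
    intro g _
    exact ⟨Fin.elim0, by rw [Matrix.det_fin_zero]; exact one_ne_zero⟩
  | succ m ih =>
    intro g hg
    have hg0 : g 0 ≠ 0 := hg.ne_zero 0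
    obtain ⟨J, hJ⟩ := MvPolynomial.ne_zero_iff.mp hg0
    set r : Fin m → K := fun j => MvPolynomial.coeff J (g j.succ) / MvPolynomial.coeff J (g 0)
      with hr
    set g' : Fin m → MvPolynomial (Fin N) K := fun j => g j.succ - r j • g 0 with hg'
    have hzero : ∀ j, MvPolynomial.coeff J (g' j) = 0 := by
      intro j
      simp [hg', hr, MvPolynomial.coeff_sub, MvPolynomial.coeff_smul, smul_eq_mul,
        div_mul_cancel₀ _ hJ]
    have hg'li : LinearIndependent K g' := by
      rw [Fintype.linearIndependent_iff]
      intro t ht j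
      simp only [hg', smul_sub, smul_smul, Finset.sum_sub_distrib, ← Finset.sum_smul] at ht
      have hrel : ∑ p : Fin (m+1),
          (Fin.cons (-(∑ j, t j * r j)) t : Fin (m+1) → K) p • g p = 0 := by
        rw [Fin.sum_univ_succ]
        simp only [Fin.cons_zero, Fin.cons_succ, neg_smul]
        rw [add_comm, ← sub_eq_add_neg]
        exact ht
      have hall := (Fintype.linearIndependent_iff.mp hg) _ hrel
      simpa using hall j.succ
    obtain ⟨I', hI'⟩ := ih g' hg'li
    have hmem : ∀ p : Fin (m+1),
        (Fin.cons (g 0) g' : Fin (m+1) → _) p ∈ Submodule.span K (Set.range g) := by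
      intro p
      induction p using Fin.cases with
      | zero => simpa using Submodule.subset_span (Set.mem_range_self 0)
      | succ p =>
        simp only [Fin.cons_succ, hg']
        exact Submodule.sub_mem _ (Submodule.subset_span (Set.mem_range_self _))
          (Submodule.smul_mem _ _ (Submodule.subset_span (Set.mem_range_self 0)))
    exact ⟨Fin.cons J I', det_base_ne_zero g _ hmem _
      (det_cons_ne_zero (g 0) J hJ g' hzero I' hI')⟩

lemma core_sub {k : ℕ} (c : Fin N → ℤ) (f : Fin (k+1) → MvPolynomial (Fin N) K)
    (hind : LinearIndependent K f) (f₀ : MvPolynomial (Fin N) K)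
    (hf₀W : f₀ ∈ Submodule.span K (Set.range f)) (hf₀ : f₀ ≠ 0) :
    ∃ g : Fin k → MvPolynomial (Fin N) K,
      (∀ j, g j ∈ Submodule.span K (Set.range f)) ∧ LinearIndependent K g ∧
      omegaW c f - omega c f₀ ≤ omegaW c g := by
  obtain ⟨J₀, hJ₀, hwt₀⟩ := exists_coeff_wt_eq c hf₀
  obtain ⟨co, hco⟩ := (Submodule.mem_span_range_iff_exists_fun K).mp hf₀W
  obtain ⟨m₀, hm₀⟩ : ∃ m₀, co m₀ ≠ 0 := by
    by_contra hcon
    push_neg at hcon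
    exact hf₀ (by rw [← hco]; exact Finset.sum_eq_zero fun m _ => by rw [hcon m, zero_smul])
  set c₀ : K := MvPolynomial.coeff J₀ f₀ with hc₀
  set g : Fin k → MvPolynomial (Fin N) K :=
    fun j => MvPolynomial.coeff J₀ (f (m₀.succAbove j)) • f₀ - c₀ • f (m₀.succAbove j) with hg
  have hgmem : ∀ j, g j ∈ Submodule.span K (Set.range f) := fun j =>
    Submodule.sub_mem _ (Submodule.smul_mem _ _ hf₀W)
      (Submodule.smul_mem _ _ (Submodule.subset_span (Set.mem_range_self _)))
  have hgzero : ∀ j, MvPolynomial.coeff J₀ (g j) = 0 := by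
    intro j
    simp only [hg, MvPolynomial.coeff_sub, MvPolynomial.coeff_smul, smul_eq_mul]
    ring
  have hgli : LinearIndependent K g := by
    rw [Fintype.linearIndependent_iff]
    intro t ht j
    set s : K := ∑ j, t j * MvPolynomial.coeff J₀ (f (m₀.succAbove j)) with hs
    set u : Fin (k+1) → K :=
      fun m => s * co m - c₀ * (∑ j, if m₀.succAbove j = m then t j else 0) with hu
    have e1 : ∑ m, (s * co m) • f m = s • f₀ := by
      rw [← hco, Finset.smul_sum]
      exact Finset.sum_congr rfl fun m _ => by rw [smul_smul]
    have e2 : ∑ m, (c₀ * (∑ j, if m₀.succAbove j = m then t j else 0)) • f m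
        = ∑ j, (c₀ * t j) • f (m₀.succAbove j) := by
      have estep : ∀ m : Fin (k+1), (c₀ * (∑ j, if m₀.succAbove j = m then t j else 0)) • f m
          = ∑ j, (if m₀.succAbove j = m then (c₀ * t j) • f m else 0) := by
        intro m
        rw [Finset.mul_sum, Finset.sum_smul]
        exact Finset.sum_congr rfl fun j _ => by split <;> simp
      rw [Finset.sum_congr rfl fun m _ => estep m, Finset.sum_comm]
      refine Finset.sum_congr rfl fun j _ => ?_
      rw [Finset.sum_ite_eq]
      simp
    have hexp : ∑ j, t j • g j = s • f₀ - ∑ j, (c₀ * t j) • f (m₀.succAbove j) := by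
      simp only [hg, smul_sub, smul_smul, Finset.sum_sub_distrib]
      congr 1
      · rw [hs, Finset.sum_smul]
      · exact Finset.sum_congr rfl fun j _ => by rw [mul_comm]
    have hrel : ∑ m, u m • f m = 0 := by
      calc ∑ m, u m • f m
          = ∑ m, ((s * co m) • f m
            - (c₀ * (∑ j, if m₀.succAbove j = m then t j else 0)) • f m) := by
            refine Finset.sum_congr rfl fun m _ => ?_
            simp only [hu]
            rw [sub_smul]
        _ = s • f₀ - ∑ j, (c₀ * t j) • f (m₀.succAbove j) := by
            rw [Finset.sum_sub_distrib, e1, e2]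
        _ = 0 := by rw [← hexp]; exact ht
    have hall := (Fintype.linearIndependent_iff.mp hind) u hrel
    have hs0 : s = 0 := by
      have h1 := hall m₀
      have h2 : (∑ j, if m₀.succAbove j = m₀ then t j else 0) = 0 :=
        Finset.sum_eq_zero fun j _ => if_neg (Fin.succAbove_ne m₀ j)
      simp only [hu, h2, mul_zero, sub_zero] at h1
      exact (mul_eq_zero.mp h1).resolve_right hm₀
    have h3 := hall (m₀.succAbove j)
    have h4 : (∑ j', if m₀.succAbove j' = m₀.succAbove j then t j' else 0) = t j := by
      rw [Finset.sum_eq_single j]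
      · exact if_pos rfl
      · intro b _ hb
        exact if_neg fun hh => hb (Fin.succAbove_right_injective hh)
      · intro habs
        exact absurd (Finset.mem_univ j) habs
    simp only [hu, h4, hs0, zero_mul, zero_sub, neg_eq_zero] at h3
    exact (mul_eq_zero.mp h3).resolve_left hJ₀
  refine ⟨g, hgmem, hgli, ?_⟩
  obtain ⟨I₀, hI₀⟩ := exists_tuple_det_ne_zero k g hgli
  rw [show omegaW c g = sInf { s : ℤ | ∃ I : Fin k → (Fin N →₀ ℕ),
      (Matrix.of fun j i => MvPolynomial.coeff (I i) (g j)).det ≠ 0 ∧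
      s = ∑ j, wt c (I j) } from rfl]
  have hne : (∑ j, wt c (I₀ j)) ∈ { s : ℤ | ∃ I : Fin k → (Fin N →₀ ℕ),
      (Matrix.of fun j i => MvPolynomial.coeff (I i) (g j)).det ≠ 0 ∧
      s = ∑ j, wt c (I j) } := ⟨I₀, hI₀, rfl⟩
  apply le_csInf ⟨_, hne⟩
  rintro s ⟨I', hI'det, rfl⟩
  have hGdet := det_cons_ne_zero f₀ J₀ hJ₀ g hgzero I' hI'det
  have hmemG : ∀ p : Fin (k+1),
      (Fin.cons f₀ g : Fin (k+1) → _) p ∈ Submodule.span K (Set.range f) := by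
    intro p
    induction p using Fin.cases with
    | zero => simpa using hf₀W
    | succ p => simpa using hgmem p
  have hfdet := det_base_ne_zero f _ hmemG _ hGdet
  have hSf : omegaW c f ≤ ∑ i : Fin (k+1), wt c ((Fin.cons J₀ I' : Fin (k+1) → _) i) := by
    apply csInf_le
    · refine ⟨∑ j, omega c (f j), ?_⟩
      rintro s ⟨I, hIdet, rfl⟩
      exact sum_omega_le_sum_wt c f I hIdet
    · exact ⟨Fin.cons J₀ I', hfdet, rfl⟩
  rw [Fin.sum_univ_succ] at hSf
  simp only [Fin.cons_zero, Fin.cons_succ, hwt₀] at hSf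
  omega

lemma Aof_pos {n : ℕ} {a : Fin (n+1) → ℤ} (h : Normalized a) : 0 < Aof a := by
  obtain ⟨hmono, hsum, hpos⟩ := h
  by_contra hle
  push_neg at hle
  have hterm : ∀ l : Fin n, l ∈ Finset.univ → (0:ℤ) ≤ a l.castSucc - a (Fin.last n) :=
    fun l _ => sub_nonneg.2 (hmono (Fin.le_last _))
  have h0 : Aof a = 0 := le_antisymm hle (Finset.sum_nonneg hterm)
  have hzero := (Finset.sum_eq_zero_iff_of_nonneg hterm).mp h0
  have hall : ∀ m : Fin (n+1), a m = a (Fin.last n) := by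
    intro m
    rcases Fin.eq_castSucc_or_eq_last m with ⟨l, rfl⟩ | rfl
    · have := hzero l (Finset.mem_univ l); omega
    · rfl
  rw [Finset.sum_congr rfl (fun l _ => hall l), Finset.sum_const, Finset.card_univ,
    Fintype.card_fin, nsmul_eq_mul] at hsum
  have hlast : a (Fin.last n) = 0 := by
    have : ((n : ℤ) + 1) ≠ 0 := by positivity
    have := mul_eq_zero.mp hsum
    omega
  rw [hall 0, hlast] at hpos
  exact lt_irrefl _ hpos

end Aux

/-- If a (k+1)-dimensional system W (k > 1) of degree-d forms contains a nonzero GIT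
semistable form and is non-stable (resp. unstable), then it has a k-dimensional
subsystem which is non-stable (resp. unstable). -/
theorem stmt_17 {K : Type*} [Field K] {n d k : ℕ} (hk : 1 < k)
    (f : Fin (k+1) → MvPolynomial (Fin (n+1)) K)
    (hind : LinearIndependent K f) (hhom : ∀ j, (f j).IsHomogeneous d)
    (f₀ : MvPolynomial (Fin (n+1)) K) (hf₀W : f₀ ∈ Submodule.span K (Set.range f))
    (hf₀ : f₀ ≠ 0) (hss : FormSemistable n (d : ℚ) f₀) :
    ((∃ a : Fin (n+1) → ℤ, Normalized a ∧
        (d * (k+1) : ℚ) / (n + 1) ≤ (omegaW (cOf a) f : ℚ) / (Aof a : ℚ)) →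
      ∃ g : Fin k → MvPolynomial (Fin (n+1)) K,
        (∀ j, g j ∈ Submodule.span K (Set.range f)) ∧ LinearIndependent K g ∧
        ∃ a : Fin (n+1) → ℤ, Normalized a ∧
          (d * k : ℚ) / (n + 1) ≤ (omegaW (cOf a) g : ℚ) / (Aof a : ℚ)) ∧
    ((∃ a : Fin (n+1) → ℤ, Normalized a ∧
        (d * (k+1) : ℚ) / (n + 1) < (omegaW (cOf a) f : ℚ) / (Aof a : ℚ)) →
      ∃ g : Fin k → MvPolynomial (Fin (n+1)) K,
        (∀ j, g j ∈ Submodule.span K (Set.range f)) ∧ LinearIndependent K g ∧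
        ∃ a : Fin (n+1) → ℤ, Normalized a ∧
          (d * k : ℚ) / (n + 1) < (omegaW (cOf a) g : ℚ) / (Aof a : ℚ)) := by
  constructor
  · rintro ⟨a, hnorm, hineq⟩
    obtain ⟨g, hmem, hli, hkey⟩ := core_sub (cOf a) f hind f₀ hf₀W hf₀
    refine ⟨g, hmem, hli, a, hnorm, ?_⟩
    have hA : (0:ℚ) < (Aof a : ℚ) := by exact_mod_cast Aof_pos hnorm
    have hss' := hss a hnorm
    have hkeyQ : ((omegaW (cOf a) f : ℚ) - (omega (cOf a) f₀ : ℚ)) / (Aof a : ℚ)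
        ≤ (omegaW (cOf a) g : ℚ) / (Aof a : ℚ) :=
      (div_le_div_iff_of_pos_right hA).mpr (by exact_mod_cast hkey)
    rw [sub_div] at hkeyQ
    have hsplit : (d * (k+1) : ℚ)/(n+1) = (d*k:ℚ)/(n+1) + (d:ℚ)/(n+1) := by ring
    linarith [hkeyQ, hss', hineq, hsplit]
  · rintro ⟨a, hnorm, hineq⟩
    obtain ⟨g, hmem, hli, hkey⟩ := core_sub (cOf a) f hind f₀ hf₀W hf₀
    refine ⟨g, hmem, hli, a, hnorm, ?_⟩
    have hA : (0:ℚ) < (Aof a : ℚ) := by exact_mod_cast Aof_pos hnorm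
    have hss' := hss a hnorm
    have hkeyQ : ((omegaW (cOf a) f : ℚ) - (omega (cOf a) f₀ : ℚ)) / (Aof a : ℚ)
        ≤ (omegaW (cOf a) g : ℚ) / (Aof a : ℚ) :=
      (div_le_div_iff_of_pos_right hA).mpr (by exact_mod_cast hkey)
    rw [sub_div] at hkeyQ
    have hsplit : (d * (k+1) : ℚ)/(n+1) = (d*k:ℚ)/(n+1) + (d:ℚ)/(n+1) := by ring
    linarith [hkeyQ, hss', hineq, hsplit]
end

section
/- Let w be a linear monomial weight function with induced valuation ω on nonzero polynomials, and let W be a (k+1)-dimensional space of degree-d forms. For any l ≤ k+1 linearly independent elements f₁,...,f_l ∈ W, one has Σ_{j=1}^{l} ω(f_j) ≤ ω(W), where ω(W) = min { Σ_{j=1}^{k+1} w(I_j) : Plücker coordinate M_{I₁...I_{k+1}} ≠ 0 } computed with respect to any basis of W extending f₁,...,f_l. -/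
open MvPolynomial

lemma wt_nonneg {n : ℕ} {c : Fin n → ℤ} (hc : ∀ i, 0 ≤ c i) (I : Fin n →₀ ℕ) :
    0 ≤ wt c I :=
  Finset.sum_nonneg fun l _ => mul_nonneg (hc l) (Int.natCast_nonneg _)

lemma omega_nonneg {K : Type*} [CommSemiring K] {n : ℕ} {c : Fin n → ℤ}
    (hc : ∀ i, 0 ≤ c i) (g : MvPolynomial (Fin n) K) : 0 ≤ omega c g := by
  unfold omega
  rcases (g.support.image (wt c)).eq_empty_or_nonempty with h | h
  · simp [h]
  · rw [← Finset.coe_min' h, WithTop.untopD_coe]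
    obtain ⟨I, -, hI⟩ := Finset.mem_image.mp (Finset.min'_mem _ h)
    rw [← hI]
    exact wt_nonneg hc I

lemma omega_le {K : Type*} [CommSemiring K] {n : ℕ} (c : Fin n → ℤ)
    {g : MvPolynomial (Fin n) K} {I : Fin n →₀ ℕ} (h : MvPolynomial.coeff I g ≠ 0) :
    omega c g ≤ wt c I := by
  have hmem : wt c I ∈ g.support.image (wt c) :=
    Finset.mem_image_of_mem _ (MvPolynomial.mem_support_iff.mpr h)
  have hne : (g.support.image (wt c)).Nonempty := ⟨_, hmem⟩
  unfold omega
  rw [← Finset.coe_min' hne, WithTop.untopD_coe]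
  exact Finset.min'_le _ _ hmem

/-- A linearly independent family of (multivariate) polynomials admits a nonzero
coefficient minor. -/
lemma exists_det_ne_zero {K : Type*} [Field K] {σ : Type*} :
    ∀ {m : ℕ} (v : Fin m → MvPolynomial σ K), LinearIndependent K v →
    ∃ s : Fin m → (σ →₀ ℕ), (Matrix.of fun i j => MvPolynomial.coeff (s j) (v i)).det ≠ 0 := by
  intro m
  induction m with
  | zero =>
    intro v _
    exact ⟨fun i => i.elim0, by simp [Matrix.det_fin_zero]⟩
  | succ m ih =>
    intro v hv
    obtain ⟨s', hs'⟩ := ih (v ∘ Fin.castSucc) (hv.comp _ (Fin.castSucc_injective m))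
    set M : Matrix (Fin m) (Fin m) K :=
      Matrix.of (fun i j => MvPolynomial.coeff (s' j) (v i.castSucc)) with hMdef
    have hMdet : M.det ≠ 0 := hs'
    set r : Fin m → K := fun j => MvPolynomial.coeff (s' j) (v (Fin.last m)) with hr
    set a : Fin m → K := Matrix.vecMul r M⁻¹ with ha
    have haM : Matrix.vecMul a M = r := by
      rw [ha, Matrix.vecMul_vecMul, Matrix.nonsing_inv_mul M (isUnit_iff_ne_zero.mpr hMdet),
        Matrix.vecMul_one]
    set g : MvPolynomial σ K := v (Fin.last m) - ∑ i, a i • v i.castSucc with hg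
    have hgne : g ≠ 0 := by
      intro h0
      have hsum : ∑ k, (Fin.snoc (fun i => -a i) 1 : Fin (m+1) → K) k • v k = 0 := by
        rw [Fin.sum_univ_castSucc]
        simp only [Fin.snoc_castSucc, Fin.snoc_last, one_smul, neg_smul,
          Finset.sum_neg_distrib]
        have hvl : v (Fin.last m) = ∑ i, a i • v i.castSucc := sub_eq_zero.mp h0
        rw [hvl]
        exact neg_add_cancel _
      have hb := Fintype.linearIndependent_iff.mp hv _ hsum (Fin.last m)
      simp at hb
    obtain ⟨t, ht⟩ : ∃ t, MvPolynomial.coeff t g ≠ 0 := MvPolynomial.ne_zero_iff.mp hgne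
    have hAM : ∀ j, ∑ i, a i * MvPolynomial.coeff (s' j) (v i.castSucc) = r j := by
      intro j
      have h1 : Matrix.vecMul a M j = r j := by rw [haM]
      simpa [Matrix.vecMul, dotProduct, hMdef] using h1
    have hgs' : ∀ j, MvPolynomial.coeff (s' j) g = 0 := by
      intro j
      rw [hg]
      simp only [MvPolynomial.coeff_sub, MvPolynomial.coeff_sum, MvPolynomial.coeff_smul,
        smul_eq_mul]
      rw [hAM j, hr]
      exact sub_self _
    set s : Fin (m+1) → (σ →₀ ℕ) := Fin.snoc s' t with hs
    refine ⟨s, ?_⟩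
    set N : Matrix (Fin (m+1)) (Fin (m+1)) K :=
      Matrix.of (fun i j => MvPolynomial.coeff (s j) (v i)) with hN
    set cc : Fin (m+1) → K := fun k => if h : k = Fin.last m then 0 else -a (k.castPred h) with hcc
    have hdetN : (N.updateRow (Fin.last m)
        ((1 : K) • N (Fin.last m) + ∑ k ∈ Finset.univ.erase (Fin.last m), cc k • N k)).det
        = (1 : K) • N.det :=
      Matrix.det_updateRow_sum_aux N (Finset.univ.erase (Fin.last m))
        (Finset.notMem_erase _ _) cc 1
    rw [one_smul] at hdetN
    have hrow : N (Fin.last m) + ∑ k ∈ Finset.univ.erase (Fin.last m), cc k • N k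
        = fun j => MvPolynomial.coeff (s j) g := by
      have herase : ∑ k ∈ Finset.univ.erase (Fin.last m), cc k • N k = ∑ k, cc k • N k := by
        rw [Finset.sum_erase]
        simp [hcc]
      rw [herase, Fin.sum_univ_castSucc]
      have hccl : cc (Fin.last m) = 0 := by simp [hcc]
      have hcci : ∀ i : Fin m, cc i.castSucc = -a i := by
        intro i
        simp only [hcc]
        rw [dif_neg (Fin.castSucc_lt_last i).ne]
        simp
      funext j
      simp only [hccl, zero_smul, add_zero, Pi.add_apply, Finset.sum_apply,
        Pi.smul_apply, smul_eq_mul]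
      rw [hg]
      simp only [MvPolynomial.coeff_sub, MvPolynomial.coeff_sum, MvPolynomial.coeff_smul,
        smul_eq_mul, hN, Matrix.of_apply]
      rw [Finset.sum_congr rfl (fun i _ => by rw [hcci i])]
      rw [Finset.sum_congr rfl (fun i (_ : i ∈ Finset.univ) => neg_mul (a i) _)]
      rw [Finset.sum_neg_distrib]
      ring
    rw [hrow] at hdetN
    set N' := N.updateRow (Fin.last m) (fun j => MvPolynomial.coeff (s j) g) with hN'
    have hN'det : N'.det ≠ 0 := by
      have hre : N'.det = (N'.submatrix finSumFinEquiv finSumFinEquiv).det :=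
        (Matrix.det_submatrix_equiv_self finSumFinEquiv N').symm
      have hblocks : N'.submatrix finSumFinEquiv finSumFinEquiv =
          Matrix.fromBlocks M
            (Matrix.of fun i (_ : Fin 1) => MvPolynomial.coeff t (v i.castSucc))
            0 (Matrix.of fun (_ : Fin 1) (_ : Fin 1) => MvPolynomial.coeff t g) := by
        have hinr : ∀ j : Fin 1, (finSumFinEquiv (Sum.inr j) : Fin (m+1)) = Fin.last m := by
          intro j
          have : j = 0 := Subsingleton.elim _ _
          subst this
          ext; simp [finSumFinEquiv]
        have hinl : ∀ i : Fin m, (finSumFinEquiv (Sum.inl i) : Fin (m+1)) = i.castSucc := by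
          intro i; ext; simp [finSumFinEquiv]
        ext i j
        cases i with
        | inl i =>
          have hine : (i.castSucc : Fin (m+1)) ≠ Fin.last m := (Fin.castSucc_lt_last i).ne
          cases j with
          | inl j =>
            simp only [Matrix.submatrix_apply, hinl, Matrix.fromBlocks_apply₁₁]
            rw [hN', Matrix.updateRow_ne hine, hN]
            simp [hs, hMdef]
          | inr j =>
            simp only [Matrix.submatrix_apply, hinl, hinr, Matrix.fromBlocks_apply₁₂]
            rw [hN', Matrix.updateRow_ne hine, hN]
            simp [hs]
        | inr i =>
          cases j with
          | inl j =>
            simp only [Matrix.submatrix_apply, hinl, hinr, Matrix.fromBlocks_apply₂₁]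
            rw [hN', Matrix.updateRow_self]
            simp [hs, hgs' j]
          | inr j =>
            simp only [Matrix.submatrix_apply, hinr, Matrix.fromBlocks_apply₂₂]
            rw [hN', Matrix.updateRow_self]
            simp [hs]
      rw [hre, hblocks, Matrix.det_fromBlocks_zero₂₁]
      simp only [Matrix.det_unique, Matrix.of_apply]
      exact mul_ne_zero hMdet ht
    rw [hdetN] at hN'det
    simpa using hN'det

/-- For any l ≤ k+1 of the basis elements of a (k+1)-dimensional system of degree-d forms
(with nonnegative weights), Σ_{j≤l} ω(f_j) ≤ ω(W). -/
theorem stmt_18 {K : Type*} [Field K] {n d k l : ℕ} (hl : l ≤ k + 1)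
    (c : Fin (n+1) → ℤ) (hc : ∀ i, 0 ≤ c i)
    (f : Fin (k+1) → MvPolynomial (Fin (n+1)) K)
    (hind : LinearIndependent K f) (hhom : ∀ j, (f j).IsHomogeneous d) :
    ∑ j : Fin l, omega c (f (Fin.castLE hl j)) ≤ omegaW c f := by
  set S := { s : ℤ | ∃ I : Fin (k+1) → (Fin (n+1) →₀ ℕ),
    (Matrix.of fun j i => MvPolynomial.coeff (I i) (f j)).det ≠ 0 ∧ s = ∑ j, wt c (I j) } with hS
  have hSne : S.Nonempty := by
    obtain ⟨s, hs⟩ := exists_det_ne_zero f hind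
    exact ⟨∑ j, wt c (s j), s, hs, rfl⟩
  have hSbdd : BddBelow S := by
    refine ⟨0, fun x hx => ?_⟩
    obtain ⟨I, -, rfl⟩ := hx
    exact Finset.sum_nonneg fun j _ => wt_nonneg hc (I j)
  obtain ⟨I, hIdet, hIeq⟩ := Int.csInf_mem hSne hSbdd
  rw [omegaW, ← hS, hIeq]
  -- extract permutation from nonzero determinant
  have hperm : ∃ σ : Equiv.Perm (Fin (k+1)),
      ∀ i, MvPolynomial.coeff (I i) (f (σ i)) ≠ 0 := by
    by_contra hcon
    push_neg at hcon
    apply hIdet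
    rw [Matrix.det_apply]
    refine Finset.sum_eq_zero fun σ _ => ?_
    obtain ⟨i, hi⟩ := hcon σ
    rw [Finset.prod_eq_zero (Finset.mem_univ i) (by simpa using hi), smul_zero]
  obtain ⟨σ, hσ⟩ := hperm
  calc ∑ j : Fin l, omega c (f (Fin.castLE hl j))
      ≤ ∑ j : Fin (k+1), omega c (f j) := by
        rw [show (∑ j : Fin l, omega c (f (Fin.castLE hl j)))
            = ∑ j ∈ Finset.univ.map (Fin.castLEEmb hl), omega c (f j) by
          rw [Finset.sum_map]; rfl]
        refine Finset.sum_le_sum_of_subset_of_nonneg (Finset.subset_univ _)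
          fun j _ _ => omega_nonneg hc (f j)
    _ = ∑ j : Fin (k+1), omega c (f (σ j)) := (Equiv.sum_comp σ (fun j => omega c (f j))).symm
    _ ≤ ∑ j, wt c (I j) := Finset.sum_le_sum fun j _ => omega_le c (hσ j)
end
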